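/- Let Λ₁, Λ₂ > 0 and let φ, ψ : ℝ → ℝ be continuous. For r > 0 and (μ₁, μ₂, θ₁, θ₂) ∈ [−Λ₁, Λ₁]×[−Λ₂, Λ₂]×[0, 2π]², set A_j(r, μ_j) = e^{rΛ_j} + e^{−rΛ_j} − e^{rμ_j} − e^{−rμ_j}, W_r = e^{iθ₁}·√(A₁(r, μ₁))·e^{rμ₂/2} + e^{iθ₂}·e^{−rμ₁/2}·√(A₂(r, μ₂)), and L_r(μ₁, μ₂, θ₁, θ₂) = (1/r)·Argcosh(cosh(r(μ₁ + μ₂)) + |W_r|²/2). Then (1/(4Λ₁Λ₂·4π²))·∫_{−Λ₁}^{Λ₁}∫_{−Λ₂}^{Λ₂}∫_0^{2π}∫_0^{2π} φ(L_r(μ₁, μ₂, θ₁, θ₂))·ψ(μ₁ + μ₂) dθ₁ dθ₂ dμ₂ dμ₁ converges, as r → +∞, to (1/(4Λ₁Λ₂))·∫_{−Λ₁}^{Λ₁}∫_{−Λ₂}^{Λ₂} φ(max(Λ₁ + μ₂, Λ₂ − μ₁))·ψ(μ₁ + μ₂) dμ₂ dμ₁. -/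

import Mathlib

set_option maxHeartbeats 1000000

open Filter Real Complex MeasureTheory

/-- `Argcosh x = log(x + √(x² - 1))`, the inverse of `cosh` on `[1, ∞)`. -/
noncomputable def argcosh (x : ℝ) : ℝ := Real.log (x + Real.sqrt (x ^ 2 - 1))

lemma argcosh_nonneg {x : ℝ} (hx : 1 ≤ x) : 0 ≤ argcosh x := by
  unfold argcosh
  have : (1:ℝ) ≤ x + Real.sqrt (x ^ 2 - 1) := le_add_of_le_of_nonneg hx (Real.sqrt_nonneg _)
  exact Real.log_nonneg this

lemma log_le_argcosh {x : ℝ} (hx : 1 ≤ x) : Real.log x ≤ argcosh x := by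
  unfold argcosh
  exact Real.log_le_log (by linarith) (le_add_of_nonneg_right (Real.sqrt_nonneg _))

lemma argcosh_le {x : ℝ} (hx : 1 ≤ x) : argcosh x ≤ Real.log x + Real.log 2 := by
  unfold argcosh
  have h0 : (0:ℝ) < x := by linarith
  have hs : Real.sqrt (x ^ 2 - 1) ≤ x := by
    have : Real.sqrt (x ^ 2 - 1) ≤ Real.sqrt (x ^ 2) := Real.sqrt_le_sqrt (by linarith)
    simpa [Real.sqrt_sq h0.le] using this
  calc Real.log (x + Real.sqrt (x ^ 2 - 1)) ≤ Real.log (x * 2) :=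
        Real.log_le_log (by positivity) (by linarith)
    _ = Real.log x + Real.log 2 := Real.log_mul h0.ne' two_ne_zero

lemma tendsto_argcosh_squeeze {M c₁ c₂ : ℝ} {f : ℝ → ℝ} (hc₁ : 0 < c₁) (hc₂ : 0 < c₂)
    (h1 : ∀ᶠ r in atTop, 1 ≤ f r)
    (hl : ∀ᶠ r in atTop, c₁ * Real.exp (r * M) ≤ f r)
    (hu : ∀ᶠ r in atTop, f r ≤ c₂ * Real.exp (r * M)) :
    Tendsto (fun r => (1 / r) * argcosh (f r)) atTop (nhds M) := by
  have hlo : Tendsto (fun r : ℝ => Real.log c₁ / r + M) atTop (nhds M) := by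
    simpa using (tendsto_const_nhds.div_atTop (tendsto_id)).add_const M
  have hhi : Tendsto (fun r : ℝ => (Real.log c₂ + Real.log 2) / r + M) atTop (nhds M) := by
    simpa using (tendsto_const_nhds.div_atTop (tendsto_id)).add_const M
  refine tendsto_of_tendsto_of_tendsto_of_le_of_le' hlo hhi ?_ ?_
  · filter_upwards [h1, hl, eventually_gt_atTop (0:ℝ)] with r h1 hl hr
    have : Real.log (c₁ * Real.exp (r * M)) ≤ argcosh (f r) :=
      le_trans (Real.log_le_log (by positivity) hl) (log_le_argcosh h1)
    rw [Real.log_mul hc₁.ne' (Real.exp_ne_zero _), Real.log_exp] at this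
    have h2 : (Real.log c₁ + r * M) / r ≤ argcosh (f r) / r := by gcongr
    have e : Real.log c₁ / r + M = (Real.log c₁ + r * M) / r := by field_simp
    rw [e, one_div, inv_mul_eq_div]; exact h2
  · filter_upwards [h1, hu, eventually_gt_atTop (0:ℝ)] with r h1 hu hr
    have : argcosh (f r) ≤ Real.log (c₂ * Real.exp (r * M)) + Real.log 2 :=
      le_trans (argcosh_le h1) (by
        have := Real.log_le_log (by linarith) hu
        linarith)
    rw [Real.log_mul hc₂.ne' (Real.exp_ne_zero _), Real.log_exp] at this
    have h0 : 0 ≤ argcosh (f r) := argcosh_nonneg h1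
    have h2 : argcosh (f r) / r ≤ (Real.log c₂ + r * M + Real.log 2) / r := by gcongr
    have e : (Real.log c₂ + Real.log 2) / r + M = (Real.log c₂ + r * M + Real.log 2) / r := by
      field_simp; ring
    rw [e, one_div, inv_mul_eq_div]; exact h2

noncomputable def Afun (r Λ μ : ℝ) : ℝ :=
  Real.exp (r * Λ) + Real.exp (-(r * Λ)) - Real.exp (r * μ) - Real.exp (-(r * μ))

noncomputable def Wfun (r Λ₁ Λ₂ μ₁ μ₂ θ₁ θ₂ : ℝ) : ℂ :=
  Complex.exp (θ₁ * Complex.I) * (Real.sqrt (Afun r Λ₁ μ₁) : ℝ) *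
      Complex.exp ((r * μ₂ / 2 : ℝ) : ℂ) +
    Complex.exp (θ₂ * Complex.I) * Complex.exp ((-(r * μ₁) / 2 : ℝ) : ℂ) *
      (Real.sqrt (Afun r Λ₂ μ₂) : ℝ)

noncomputable def Xfun (r Λ₁ Λ₂ μ₁ μ₂ θ₁ θ₂ : ℝ) : ℝ :=
  Real.cosh (r * (μ₁ + μ₂)) + Complex.normSq (Wfun r Λ₁ Λ₂ μ₁ μ₂ θ₁ θ₂) / 2

lemma one_le_Xfun (r Λ₁ Λ₂ μ₁ μ₂ θ₁ θ₂ : ℝ) : 1 ≤ Xfun r Λ₁ Λ₂ μ₁ μ₂ θ₁ θ₂ := by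
  have h1 := Real.one_le_cosh (r * (μ₁ + μ₂))
  have h2 := Complex.normSq_nonneg (Wfun r Λ₁ Λ₂ μ₁ μ₂ θ₁ θ₂)
  unfold Xfun; linarith

lemma abs_term1 (r Λ₁ μ₁ μ₂ θ₁ : ℝ) :
    norm (Complex.exp (θ₁ * Complex.I) * (Real.sqrt (Afun r Λ₁ μ₁) : ℝ) *
      Complex.exp ((r * μ₂ / 2 : ℝ) : ℂ))
    = Real.sqrt (Afun r Λ₁ μ₁) * Real.exp (r * μ₂ / 2) := by
  simp [map_mul, Complex.norm_exp, _root_.abs_of_nonneg (Real.sqrt_nonneg _)]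

lemma abs_term2 (r Λ₂ μ₁ μ₂ θ₂ : ℝ) :
    norm (Complex.exp (θ₂ * Complex.I) * Complex.exp ((-(r * μ₁) / 2 : ℝ) : ℂ) *
      (Real.sqrt (Afun r Λ₂ μ₂) : ℝ))
    = Real.exp (-(r * μ₁) / 2) * Real.sqrt (Afun r Λ₂ μ₂) := by
  simp [map_mul, Complex.norm_exp, _root_.abs_of_nonneg (Real.sqrt_nonneg _)]

lemma abs_add_lower (u v : ℂ) : ‖u‖ - ‖v‖ ≤ ‖u + v‖ := by
  have h := norm_add_le (u + v) (-v)
  simp only [add_neg_cancel_right, norm_neg] at h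
  linarith

lemma A_nonneg {r Λ μ : ℝ} (hr : 0 ≤ r) (hμ : |μ| ≤ Λ) : 0 ≤ Afun r Λ μ := by
  have h : Real.cosh (r * μ) ≤ Real.cosh (r * Λ) := by
    apply Real.cosh_le_cosh.mpr
    rw [abs_mul, abs_mul, _root_.abs_of_nonneg hr, _root_.abs_of_nonneg (le_trans (abs_nonneg μ) hμ)]
    exact mul_le_mul_of_nonneg_left hμ hr
  rw [Real.cosh_eq, Real.cosh_eq] at h
  unfold Afun; linarith

lemma A_le {r Λ : ℝ} (μ : ℝ) (hr : 0 ≤ r) (hΛ : 0 ≤ Λ) :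
    Afun r Λ μ ≤ 2 * Real.exp (r * Λ) := by
  have h1 : Real.exp (-(r * Λ)) ≤ Real.exp (r * Λ) := Real.exp_le_exp.mpr (by nlinarith)
  have h2 := Real.exp_pos (r * μ)
  have h3 := Real.exp_pos (-(r * μ))
  unfold Afun; linarith

lemma A_lower {Λ μ : ℝ} (hμ : |μ| < Λ) :
    ∀ᶠ r in atTop, (1 / 2) * Real.exp (r * Λ) ≤ Afun r Λ μ := by
  have hpos : 0 < Λ - |μ| := by linarith
  have ht : Tendsto (fun r : ℝ => Real.exp (r * (Λ - |μ|))) atTop atTop :=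
    Real.tendsto_exp_atTop.comp (Tendsto.atTop_mul_const hpos tendsto_id)
  filter_upwards [ht.eventually_ge_atTop 4, eventually_ge_atTop (0:ℝ)] with r h4 hr
  have e1 : Real.exp (r * μ) ≤ Real.exp (r * |μ|) :=
    Real.exp_le_exp.mpr (mul_le_mul_of_nonneg_left (le_abs_self μ) hr)
  have e2 : Real.exp (-(r * μ)) ≤ Real.exp (r * |μ|) := by
    apply Real.exp_le_exp.mpr
    rw [show -(r * μ) = r * (-μ) by ring]
    exact mul_le_mul_of_nonneg_left (neg_le_abs μ) hr
  have key : Real.exp (r * |μ|) * 4 ≤ Real.exp (r * Λ) := by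
    have h := mul_le_mul_of_nonneg_left h4 (Real.exp_nonneg (r * |μ|))
    rwa [← Real.exp_add, show r * |μ| + r * (Λ - |μ|) = r * Λ by ring] at h
  have hp := Real.exp_pos (-(r * Λ))
  unfold Afun; linarith

/-- abs of Wfun squared equals its normSq, and key bounds on it. -/
lemma core_tendsto {Λ₁ Λ₂ μ₁ μ₂ : ℝ} (θ₁ θ₂ : ℝ)
    (h1 : |μ₁| < Λ₁) (h2 : |μ₂| < Λ₂) (hne : Λ₁ + μ₂ ≠ Λ₂ - μ₁) :
    Tendsto (fun r => (1 / r) * argcosh (Xfun r Λ₁ Λ₂ μ₁ μ₂ θ₁ θ₂)) atTop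
      (nhds (max (Λ₁ + μ₂) (Λ₂ - μ₁))) := by
  set p := Λ₁ + μ₂ with hp
  set q := Λ₂ - μ₁ with hq
  have hΛ₁ : 0 < Λ₁ := lt_of_le_of_lt (abs_nonneg μ₁) h1
  have hΛ₂ : 0 < Λ₂ := lt_of_le_of_lt (abs_nonneg μ₂) h2
  have habs1 : -Λ₁ ≤ μ₁ ∧ μ₁ ≤ Λ₁ := abs_le.mp h1.le
  have habs2 : -Λ₂ ≤ μ₂ ∧ μ₂ ≤ Λ₂ := abs_le.mp h2.le
  have hpM : p ≤ max p q := le_max_left _ _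
  have hqM : q ≤ max p q := le_max_right _ _
  set a : ℝ → ℝ := fun r => Real.sqrt (Afun r Λ₁ μ₁) * Real.exp (r * μ₂ / 2) with ha
  set b : ℝ → ℝ := fun r => Real.exp (-(r * μ₁) / 2) * Real.sqrt (Afun r Λ₂ μ₂) with hb
  have ha0 : ∀ r, 0 ≤ a r := fun r => mul_nonneg (Real.sqrt_nonneg _) (Real.exp_nonneg _)
  have hb0 : ∀ r, 0 ≤ b r := fun r => mul_nonneg (Real.exp_nonneg _) (Real.sqrt_nonneg _)
  have ha2 : ∀ r : ℝ, 0 ≤ r → a r ^ 2 = Afun r Λ₁ μ₁ * Real.exp (r * μ₂) := by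
    intro r hr
    have hA := A_nonneg (Λ := Λ₁) (μ := μ₁) hr h1.le
    rw [ha]
    show (Real.sqrt (Afun r Λ₁ μ₁) * Real.exp (r * μ₂ / 2)) ^ 2 = _
    rw [mul_pow, Real.sq_sqrt hA, pow_two, ← Real.exp_add,
      show r * μ₂ / 2 + r * μ₂ / 2 = r * μ₂ by ring]
  have hb2 : ∀ r : ℝ, 0 ≤ r → b r ^ 2 = Real.exp (-(r * μ₁)) * Afun r Λ₂ μ₂ := by
    intro r hr
    have hA := A_nonneg (Λ := Λ₂) (μ := μ₂) hr h2.le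
    rw [hb]
    show (Real.exp (-(r * μ₁) / 2) * Real.sqrt (Afun r Λ₂ μ₂)) ^ 2 = _
    rw [mul_pow, Real.sq_sqrt hA, pow_two (Real.exp _), ← Real.exp_add,
      show -(r * μ₁) / 2 + -(r * μ₁) / 2 = -(r * μ₁) by ring]
  -- bounds on the two squares
  have ha2u : ∀ r : ℝ, 0 ≤ r → a r ^ 2 ≤ 2 * Real.exp (r * p) := by
    intro r hr
    rw [ha2 r hr, hp, show r * (Λ₁ + μ₂) = r * Λ₁ + r * μ₂ by ring, Real.exp_add, ← mul_assoc]
    exact mul_le_mul_of_nonneg_right (A_le μ₁ hr hΛ₁.le) (Real.exp_nonneg _)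
  have hb2u : ∀ r : ℝ, 0 ≤ r → b r ^ 2 ≤ 2 * Real.exp (r * q) := by
    intro r hr
    rw [hb2 r hr, hq, show r * (Λ₂ - μ₁) = -(r * μ₁) + r * Λ₂ by ring, Real.exp_add,
      mul_comm (2:ℝ) _, mul_assoc]
    exact mul_le_mul_of_nonneg_left (by
      rw [mul_comm]; exact A_le μ₂ hr hΛ₂.le) (Real.exp_nonneg _)
  -- abs of W
  have hWu : ∀ r, norm (Wfun r Λ₁ Λ₂ μ₁ μ₂ θ₁ θ₂) ≤ a r + b r := by
    intro r
    refine le_trans (norm_add_le _ _) ?_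
    rw [abs_term1, abs_term2]
  have hWl1 : ∀ r, a r - b r ≤ norm (Wfun r Λ₁ Λ₂ μ₁ μ₂ θ₁ θ₂) := by
    intro r
    have := abs_add_lower
      (Complex.exp (θ₁ * Complex.I) * (Real.sqrt (Afun r Λ₁ μ₁) : ℝ) *
        Complex.exp ((r * μ₂ / 2 : ℝ) : ℂ))
      (Complex.exp (θ₂ * Complex.I) * Complex.exp ((-(r * μ₁) / 2 : ℝ) : ℂ) *
        (Real.sqrt (Afun r Λ₂ μ₂) : ℝ))
    rwa [abs_term1, abs_term2] at this
  have hWl2 : ∀ r, b r - a r ≤ norm (Wfun r Λ₁ Λ₂ μ₁ μ₂ θ₁ θ₂) := by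
    intro r
    have := abs_add_lower
      (Complex.exp (θ₂ * Complex.I) * Complex.exp ((-(r * μ₁) / 2 : ℝ) : ℂ) *
        (Real.sqrt (Afun r Λ₂ μ₂) : ℝ))
      (Complex.exp (θ₁ * Complex.I) * (Real.sqrt (Afun r Λ₁ μ₁) : ℝ) *
        Complex.exp ((r * μ₂ / 2 : ℝ) : ℂ))
    rw [abs_term1, abs_term2] at this
    rwa [show Wfun r Λ₁ Λ₂ μ₁ μ₂ θ₁ θ₂ =
      Complex.exp (θ₂ * Complex.I) * Complex.exp ((-(r * μ₁) / 2 : ℝ) : ℂ) *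
        (Real.sqrt (Afun r Λ₂ μ₂) : ℝ) +
      Complex.exp (θ₁ * Complex.I) * (Real.sqrt (Afun r Λ₁ μ₁) : ℝ) *
        Complex.exp ((r * μ₂ / 2 : ℝ) : ℂ) from add_comm _ _]
  have hnormSq : ∀ r, Complex.normSq (Wfun r Λ₁ Λ₂ μ₁ μ₂ θ₁ θ₂) =
      norm (Wfun r Λ₁ Λ₂ μ₁ μ₂ θ₁ θ₂) ^ 2 := fun r => (Complex.sq_norm _).symm
  -- upper bound on X
  have hXu : ∀ᶠ r in atTop, Xfun r Λ₁ Λ₂ μ₁ μ₂ θ₁ θ₂ ≤ 5 * Real.exp (r * max p q) := by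
    filter_upwards [eventually_ge_atTop (0:ℝ)] with r hr
    have hcosh : Real.cosh (r * (μ₁ + μ₂)) ≤ Real.exp (r * max p q) := by
      rw [Real.cosh_eq]
      have l1 : r * (μ₁ + μ₂) ≤ r * max p q :=
        mul_le_mul_of_nonneg_left (le_trans (by rw [hp]; linarith [habs1.2]) hpM) hr
      have l2 : -(r * (μ₁ + μ₂)) ≤ r * max p q := by
        rw [show -(r * (μ₁ + μ₂)) = r * (-(μ₁ + μ₂)) by ring]
        exact mul_le_mul_of_nonneg_left (le_trans (by rw [hq]; linarith [habs2.1]) hqM) hr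
      have := Real.exp_le_exp.mpr l1
      have := Real.exp_le_exp.mpr l2
      linarith
    have hsq : Complex.normSq (Wfun r Λ₁ Λ₂ μ₁ μ₂ θ₁ θ₂) ≤ (a r + b r) ^ 2 := by
      rw [hnormSq r]
      have := norm_nonneg (Wfun r Λ₁ Λ₂ μ₁ μ₂ θ₁ θ₂)
      nlinarith [hWu r, ha0 r, hb0 r]
    have hab : (a r + b r) ^ 2 ≤ 2 * (a r ^ 2) + 2 * (b r ^ 2) := by nlinarith [sq_nonneg (a r - b r)]
    have hepm : Real.exp (r * p) ≤ Real.exp (r * max p q) :=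
      Real.exp_le_exp.mpr (mul_le_mul_of_nonneg_left hpM hr)
    have heqm : Real.exp (r * q) ≤ Real.exp (r * max p q) :=
      Real.exp_le_exp.mpr (mul_le_mul_of_nonneg_left hqM hr)
    have := ha2u r hr
    have := hb2u r hr
    rw [Xfun]
    linarith
  -- lower bound on X
  have hXl : ∀ᶠ r in atTop, (1/16 : ℝ) * Real.exp (r * max p q) ≤ Xfun r Λ₁ Λ₂ μ₁ μ₂ θ₁ θ₂ := by
    rcases hne.lt_or_gt with hlt | hlt
    · -- p < q, M = q, b dominates
      have hM : max p q = q := max_eq_right hlt.le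
      have hgap : (0:ℝ) < q - p := by linarith
      have ht : Tendsto (fun r : ℝ => Real.exp (r * (q - p))) atTop atTop :=
        Real.tendsto_exp_atTop.comp (Tendsto.atTop_mul_const hgap tendsto_id)
      filter_upwards [A_lower h2, ht.eventually_ge_atTop 16, eventually_ge_atTop (0:ℝ)]
        with r hA h16 hr
      have hbl : (1/2 : ℝ) * Real.exp (r * q) ≤ b r ^ 2 := by
        rw [hb2 r hr, hq, show r * (Λ₂ - μ₁) = -(r * μ₁) + r * Λ₂ by ring, Real.exp_add]
        calc (1/2 : ℝ) * (Real.exp (-(r * μ₁)) * Real.exp (r * Λ₂))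
            = Real.exp (-(r * μ₁)) * ((1/2) * Real.exp (r * Λ₂)) := by ring
          _ ≤ Real.exp (-(r * μ₁)) * Afun r Λ₂ μ₂ :=
            mul_le_mul_of_nonneg_left hA (Real.exp_nonneg _)
      have hau : a r ^ 2 ≤ 2 * Real.exp (r * p) := ha2u r hr
      have hqp : 16 * Real.exp (r * p) ≤ Real.exp (r * q) := by
        have h := mul_le_mul_of_nonneg_left h16 (Real.exp_nonneg (r * p))
        rw [← Real.exp_add, show r * p + r * (q - p) = r * q by ring] at h
        linarith [h]
      have hba : a r ≤ b r / 2 := by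
        nlinarith [ha0 r, hb0 r, Real.exp_nonneg (r * p)]
      have habsW : b r / 2 ≤ norm (Wfun r Λ₁ Λ₂ μ₁ μ₂ θ₁ θ₂) := by
        linarith [hWl2 r]
      have hsql : b r ^ 2 / 4 ≤ Complex.normSq (Wfun r Λ₁ Λ₂ μ₁ μ₂ θ₁ θ₂) := by
        rw [hnormSq r, show b r ^ 2 / 4 = (b r / 2) ^ 2 by ring]
        exact pow_le_pow_left₀ (by linarith [hb0 r]) habsW 2
      have hcosh : (0:ℝ) ≤ Real.cosh (r * (μ₁ + μ₂)) := le_of_lt (Real.cosh_pos _)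
      rw [hM, Xfun]
      linarith
    · -- q < p, M = p, a dominates
      have hM : max p q = p := max_eq_left hlt.le
      have hgap : (0:ℝ) < p - q := by linarith
      have ht : Tendsto (fun r : ℝ => Real.exp (r * (p - q))) atTop atTop :=
        Real.tendsto_exp_atTop.comp (Tendsto.atTop_mul_const hgap tendsto_id)
      filter_upwards [A_lower h1, ht.eventually_ge_atTop 16, eventually_ge_atTop (0:ℝ)]
        with r hA h16 hr
      have hal : (1/2 : ℝ) * Real.exp (r * p) ≤ a r ^ 2 := by
        rw [ha2 r hr, hp, show r * (Λ₁ + μ₂) = r * Λ₁ + r * μ₂ by ring, Real.exp_add,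
          ← mul_assoc]
        exact mul_le_mul_of_nonneg_right hA (Real.exp_nonneg _)
      have hbu : b r ^ 2 ≤ 2 * Real.exp (r * q) := hb2u r hr
      have hqp : 16 * Real.exp (r * q) ≤ Real.exp (r * p) := by
        have h := mul_le_mul_of_nonneg_left h16 (Real.exp_nonneg (r * q))
        rw [← Real.exp_add, show r * q + r * (p - q) = r * p by ring] at h
        linarith [h]
      have hba : b r ≤ a r / 2 := by
        nlinarith [ha0 r, hb0 r, Real.exp_nonneg (r * q)]
      have habsW : a r / 2 ≤ norm (Wfun r Λ₁ Λ₂ μ₁ μ₂ θ₁ θ₂) := by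
        linarith [hWl1 r]
      have hsql : a r ^ 2 / 4 ≤ Complex.normSq (Wfun r Λ₁ Λ₂ μ₁ μ₂ θ₁ θ₂) := by
        rw [hnormSq r, show a r ^ 2 / 4 = (a r / 2) ^ 2 by ring]
        exact pow_le_pow_left₀ (by linarith [ha0 r]) habsW 2
      have hcosh : (0:ℝ) ≤ Real.cosh (r * (μ₁ + μ₂)) := le_of_lt (Real.cosh_pos _)
      rw [hM, Xfun]
      linarith
  exact tendsto_argcosh_squeeze (by norm_num) (by norm_num : (0:ℝ) < 5)
    (Eventually.of_forall fun r => one_le_Xfun r Λ₁ Λ₂ μ₁ μ₂ θ₁ θ₂) hXl hXu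

lemma Xfun_le {Λ₁ Λ₂ r μ₁ μ₂ : ℝ} (θ₁ θ₂ : ℝ) (hr : 0 ≤ r)
    (hΛ₁ : 0 < Λ₁) (hΛ₂ : 0 < Λ₂) (h1 : |μ₁| ≤ Λ₁) (h2 : |μ₂| ≤ Λ₂) :
    Xfun r Λ₁ Λ₂ μ₁ μ₂ θ₁ θ₂ ≤ 5 * Real.exp (r * max (Λ₁ + μ₂) (Λ₂ - μ₁)) := by
  set p := Λ₁ + μ₂ with hp
  set q := Λ₂ - μ₁ with hq
  have habs1 : -Λ₁ ≤ μ₁ ∧ μ₁ ≤ Λ₁ := abs_le.mp h1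
  have habs2 : -Λ₂ ≤ μ₂ ∧ μ₂ ≤ Λ₂ := abs_le.mp h2
  have hpM : p ≤ max p q := le_max_left _ _
  have hqM : q ≤ max p q := le_max_right _ _
  set a : ℝ := Real.sqrt (Afun r Λ₁ μ₁) * Real.exp (r * μ₂ / 2) with ha
  set b : ℝ := Real.exp (-(r * μ₁) / 2) * Real.sqrt (Afun r Λ₂ μ₂) with hb
  have ha0 : 0 ≤ a := mul_nonneg (Real.sqrt_nonneg _) (Real.exp_nonneg _)
  have hb0 : 0 ≤ b := mul_nonneg (Real.exp_nonneg _) (Real.sqrt_nonneg _)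
  have ha2 : a ^ 2 = Afun r Λ₁ μ₁ * Real.exp (r * μ₂) := by
    rw [ha, mul_pow, Real.sq_sqrt (A_nonneg hr h1), pow_two, ← Real.exp_add,
      show r * μ₂ / 2 + r * μ₂ / 2 = r * μ₂ by ring]
  have hb2 : b ^ 2 = Real.exp (-(r * μ₁)) * Afun r Λ₂ μ₂ := by
    rw [hb, mul_pow, Real.sq_sqrt (A_nonneg hr h2), pow_two (Real.exp _), ← Real.exp_add,
      show -(r * μ₁) / 2 + -(r * μ₁) / 2 = -(r * μ₁) by ring]
  have ha2u : a ^ 2 ≤ 2 * Real.exp (r * p) := by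
    rw [ha2, hp, show r * (Λ₁ + μ₂) = r * Λ₁ + r * μ₂ by ring, Real.exp_add, ← mul_assoc]
    exact mul_le_mul_of_nonneg_right (A_le μ₁ hr hΛ₁.le) (Real.exp_nonneg _)
  have hb2u : b ^ 2 ≤ 2 * Real.exp (r * q) := by
    rw [hb2, hq, show r * (Λ₂ - μ₁) = -(r * μ₁) + r * Λ₂ by ring, Real.exp_add,
      mul_comm (2:ℝ) _, mul_assoc]
    exact mul_le_mul_of_nonneg_left (by
      rw [mul_comm]; exact A_le μ₂ hr hΛ₂.le) (Real.exp_nonneg _)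
  have hWu : norm (Wfun r Λ₁ Λ₂ μ₁ μ₂ θ₁ θ₂) ≤ a + b := by
    refine le_trans (norm_add_le _ _) ?_
    rw [abs_term1, abs_term2]
  have hcosh : Real.cosh (r * (μ₁ + μ₂)) ≤ Real.exp (r * max p q) := by
    rw [Real.cosh_eq]
    have l1 : r * (μ₁ + μ₂) ≤ r * max p q :=
      mul_le_mul_of_nonneg_left (le_trans (by rw [hp]; linarith [habs1.2]) hpM) hr
    have l2 : -(r * (μ₁ + μ₂)) ≤ r * max p q := by
      rw [show -(r * (μ₁ + μ₂)) = r * (-(μ₁ + μ₂)) by ring]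
      exact mul_le_mul_of_nonneg_left (le_trans (by rw [hq]; linarith [habs2.1]) hqM) hr
    have := Real.exp_le_exp.mpr l1
    have := Real.exp_le_exp.mpr l2
    linarith
  have hsq : Complex.normSq (Wfun r Λ₁ Λ₂ μ₁ μ₂ θ₁ θ₂) ≤ (a + b) ^ 2 := by
    rw [← Complex.sq_norm]
    have := norm_nonneg (Wfun r Λ₁ Λ₂ μ₁ μ₂ θ₁ θ₂)
    nlinarith
  have hab : (a + b) ^ 2 ≤ 2 * a ^ 2 + 2 * b ^ 2 := by nlinarith [sq_nonneg (a - b)]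
  have hepm : Real.exp (r * p) ≤ Real.exp (r * max p q) :=
    Real.exp_le_exp.mpr (mul_le_mul_of_nonneg_left hpM hr)
  have heqm : Real.exp (r * q) ≤ Real.exp (r * max p q) :=
    Real.exp_le_exp.mpr (mul_le_mul_of_nonneg_left hqM hr)
  rw [Xfun]
  linarith

lemma L_mem {Λ₁ Λ₂ r μ₁ μ₂ : ℝ} (θ₁ θ₂ : ℝ) (hr : 1 ≤ r)
    (hΛ₁ : 0 < Λ₁) (hΛ₂ : 0 < Λ₂) (h1 : |μ₁| ≤ Λ₁) (h2 : |μ₂| ≤ Λ₂) :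
    (1 / r) * argcosh (Xfun r Λ₁ Λ₂ μ₁ μ₂ θ₁ θ₂) ∈
      Set.Icc (0:ℝ) (Λ₁ + Λ₂ + Real.log 10) := by
  have hr0 : (0:ℝ) < r := lt_of_lt_of_le one_pos hr
  have hX1 := one_le_Xfun r Λ₁ Λ₂ μ₁ μ₂ θ₁ θ₂
  constructor
  · exact mul_nonneg (by positivity) (argcosh_nonneg hX1)
  · have habs1 := abs_le.mp h1
    have habs2 := abs_le.mp h2
    have hM : max (Λ₁ + μ₂) (Λ₂ - μ₁) ≤ Λ₁ + Λ₂ := by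
      apply max_le <;> linarith [habs1.1, habs2.2]
    have hXle : Xfun r Λ₁ Λ₂ μ₁ μ₂ θ₁ θ₂ ≤ 5 * Real.exp (r * (Λ₁ + Λ₂)) := by
      refine le_trans (Xfun_le θ₁ θ₂ hr0.le hΛ₁ hΛ₂ h1 h2) ?_
      have : Real.exp (r * max (Λ₁ + μ₂) (Λ₂ - μ₁)) ≤ Real.exp (r * (Λ₁ + Λ₂)) :=
        Real.exp_le_exp.mpr (mul_le_mul_of_nonneg_left hM hr0.le)
      linarith
    have harg : argcosh (Xfun r Λ₁ Λ₂ μ₁ μ₂ θ₁ θ₂) ≤ r * (Λ₁ + Λ₂) + Real.log 10 := by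
      have h5 : Real.log (Xfun r Λ₁ Λ₂ μ₁ μ₂ θ₁ θ₂) ≤ Real.log (5 * Real.exp (r * (Λ₁ + Λ₂))) :=
        Real.log_le_log (by linarith) hXle
      rw [Real.log_mul (by norm_num) (Real.exp_ne_zero _), Real.log_exp] at h5
      have := argcosh_le hX1
      have hlog10 : Real.log 5 + Real.log 2 = Real.log 10 := by
        rw [← Real.log_mul (by norm_num) (by norm_num)]; norm_num
      linarith
    have hnn : 0 ≤ argcosh (Xfun r Λ₁ Λ₂ μ₁ μ₂ θ₁ θ₂) := argcosh_nonneg hX1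
    have hlog10nn : (0:ℝ) ≤ Real.log 10 := Real.log_nonneg (by norm_num)
    calc (1 / r) * argcosh (Xfun r Λ₁ Λ₂ μ₁ μ₂ θ₁ θ₂)
        ≤ (1 / r) * (r * (Λ₁ + Λ₂) + Real.log 10) := by
          apply mul_le_mul_of_nonneg_left harg (by positivity)
      _ = (Λ₁ + Λ₂) + Real.log 10 / r := by field_simp
      _ ≤ Λ₁ + Λ₂ + Real.log 10 := by
          have : Real.log 10 / r ≤ Real.log 10 := by
            rw [div_le_iff₀ hr0]; nlinarith
          linarith

lemma continuous_argcosh_comp {α : Type*} [TopologicalSpace α] {g : α → ℝ}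
    (hg : Continuous g) (h : ∀ x, 1 ≤ g x) : Continuous fun x => argcosh (g x) := by
  unfold argcosh
  have hc : Continuous fun x => g x + Real.sqrt (g x ^ 2 - 1) := by fun_prop
  refine continuous_iff_continuousAt.mpr fun x => ?_
  have hpos : g x + Real.sqrt (g x ^ 2 - 1) ≠ 0 := by
    have := h x
    have := Real.sqrt_nonneg (g x ^ 2 - 1)
    intro hz; linarith
  exact hc.continuousAt.log hpos

lemma continuous_Xfun (r Λ₁ Λ₂ : ℝ) :
    Continuous fun v : ℝ × ℝ × ℝ × ℝ => Xfun r Λ₁ Λ₂ v.1 v.2.1 v.2.2.1 v.2.2.2 := by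
  unfold Xfun Wfun Afun
  have h := Complex.continuous_normSq
  fun_prop

lemma integrableOn_Ioc4 {f : ℝ × ℝ × ℝ × ℝ → ℝ} (hf : Continuous f) (a₁ b₁ a₂ b₂ a₃ b₃ a₄ b₄ : ℝ) :
    IntegrableOn f (Set.Ioc a₁ b₁ ×ˢ Set.Ioc a₂ b₂ ×ˢ Set.Ioc a₃ b₃ ×ˢ Set.Ioc a₄ b₄)
      (MeasureTheory.volume.prod (MeasureTheory.volume.prod (MeasureTheory.volume.prod MeasureTheory.volume))) := by
  have hK : IsCompact (Set.Icc a₁ b₁ ×ˢ Set.Icc a₂ b₂ ×ˢ Set.Icc a₃ b₃ ×ˢ Set.Icc a₄ b₄) :=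
    isCompact_Icc.prod (isCompact_Icc.prod (isCompact_Icc.prod isCompact_Icc))
  refine (hf.continuousOn.integrableOn_compact hK).mono_set ?_
  exact Set.prod_mono Set.Ioc_subset_Icc_self (Set.prod_mono Set.Ioc_subset_Icc_self
    (Set.prod_mono Set.Ioc_subset_Icc_self Set.Ioc_subset_Icc_self))

lemma iter4 {f : ℝ × ℝ × ℝ × ℝ → ℝ} (hf : Continuous f) (a₁ b₁ a₂ b₂ a₃ b₃ a₄ b₄ : ℝ) :
    ∫ v in (Set.Ioc a₁ b₁ ×ˢ Set.Ioc a₂ b₂ ×ˢ Set.Ioc a₃ b₃ ×ˢ Set.Ioc a₄ b₄), f v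
        ∂(MeasureTheory.volume.prod (MeasureTheory.volume.prod (MeasureTheory.volume.prod MeasureTheory.volume)))
      = ∫ x₁ in Set.Ioc a₁ b₁, ∫ x₂ in Set.Ioc a₂ b₂, ∫ x₃ in Set.Ioc a₃ b₃, ∫ x₄ in Set.Ioc a₄ b₄,
          f (x₁, x₂, x₃, x₄) := by
  rw [MeasureTheory.setIntegral_prod _ (integrableOn_Ioc4 hf a₁ b₁ a₂ b₂ a₃ b₃ a₄ b₄)]
  refine MeasureTheory.integral_congr_ae (Filter.Eventually.of_forall fun x₁ => ?_)
  show (∫ y in Set.Ioc a₂ b₂ ×ˢ Set.Ioc a₃ b₃ ×ˢ Set.Ioc a₄ b₄, f (x₁, y)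
    ∂(MeasureTheory.volume.prod (MeasureTheory.volume.prod MeasureTheory.volume))) = _
  have hf1 : Continuous fun y : ℝ × ℝ × ℝ => f (x₁, y) := hf.comp (by fun_prop)
  have h3 : IntegrableOn (fun y : ℝ × ℝ × ℝ => f (x₁, y))
      (Set.Ioc a₂ b₂ ×ˢ Set.Ioc a₃ b₃ ×ˢ Set.Ioc a₄ b₄)
      (MeasureTheory.volume.prod (MeasureTheory.volume.prod MeasureTheory.volume)) := by
    have hK : IsCompact (Set.Icc a₂ b₂ ×ˢ Set.Icc a₃ b₃ ×ˢ Set.Icc a₄ b₄) :=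
      isCompact_Icc.prod (isCompact_Icc.prod isCompact_Icc)
    refine (hf1.continuousOn.integrableOn_compact hK).mono_set ?_
    exact Set.prod_mono Set.Ioc_subset_Icc_self (Set.prod_mono Set.Ioc_subset_Icc_self
      Set.Ioc_subset_Icc_self)
  rw [MeasureTheory.setIntegral_prod _ h3]
  refine MeasureTheory.integral_congr_ae (Filter.Eventually.of_forall fun x₂ => ?_)
  show (∫ y in Set.Ioc a₃ b₃ ×ˢ Set.Ioc a₄ b₄, f (x₁, x₂, y)
    ∂(MeasureTheory.volume.prod MeasureTheory.volume)) = _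
  have hf2 : Continuous fun y : ℝ × ℝ => f (x₁, x₂, y) := hf.comp (by fun_prop)
  have h2 : IntegrableOn (fun y : ℝ × ℝ => f (x₁, x₂, y))
      (Set.Ioc a₃ b₃ ×ˢ Set.Ioc a₄ b₄) (MeasureTheory.volume.prod MeasureTheory.volume) := by
    have hK : IsCompact (Set.Icc a₃ b₃ ×ˢ Set.Icc a₄ b₄) := isCompact_Icc.prod isCompact_Icc
    refine (hf2.continuousOn.integrableOn_compact hK).mono_set ?_
    exact Set.prod_mono Set.Ioc_subset_Icc_self Set.Ioc_subset_Icc_self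
  rw [MeasureTheory.setIntegral_prod _ h2]

/-- The right arrow of the commutative diagram (4.5): the averaged radial
coordinate of the product of two uniform dressing-orbit elements converges,
as the curvature `r → ∞`, to the average of the crystal tensor-product
highest-weight rule `max(Λ₁ + μ₂, Λ₂ - μ₁)`. -/
theorem crystal_tensor_integral_limit
    (Λ₁ Λ₂ : ℝ) (hΛ₁ : 0 < Λ₁) (hΛ₂ : 0 < Λ₂)
    (φ ψ : ℝ → ℝ) (hφ : Continuous φ) (hψ : Continuous ψ) :
    Tendsto
      (fun r : ℝ =>
        (1 / (4 * Λ₁ * Λ₂ * (4 * Real.pi ^ 2))) *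
          ∫ μ₁ in (-Λ₁)..Λ₁, ∫ μ₂ in (-Λ₂)..Λ₂,
            ∫ θ₁ in (0:ℝ)..(2 * Real.pi), ∫ θ₂ in (0:ℝ)..(2 * Real.pi),
              φ ((1 / r) * argcosh
                  (Real.cosh (r * (μ₁ + μ₂)) +
                    Complex.normSq
                      (Complex.exp (θ₁ * Complex.I) *
                          (Real.sqrt (Real.exp (r * Λ₁) + Real.exp (-(r * Λ₁)) -
                              Real.exp (r * μ₁) - Real.exp (-(r * μ₁))) : ℝ) *
                          Complex.exp ((r * μ₂ / 2 : ℝ) : ℂ) +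
                        Complex.exp (θ₂ * Complex.I) *
                          Complex.exp ((-(r * μ₁) / 2 : ℝ) : ℂ) *
                          (Real.sqrt (Real.exp (r * Λ₂) + Real.exp (-(r * Λ₂)) -
                              Real.exp (r * μ₂) - Real.exp (-(r * μ₂))) : ℝ)) / 2)) *
                ψ (μ₁ + μ₂))
      atTop
      (nhds ((1 / (4 * Λ₁ * Λ₂)) *
        ∫ μ₁ in (-Λ₁)..Λ₁, ∫ μ₂ in (-Λ₂)..Λ₂,
          φ (max (Λ₁ + μ₂) (Λ₂ - μ₁)) * ψ (μ₁ + μ₂))) := by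
  have hπ : (0:ℝ) < π := Real.pi_pos
  set P : Measure (ℝ × ℝ × ℝ × ℝ) :=
    MeasureTheory.volume.prod (MeasureTheory.volume.prod
      (MeasureTheory.volume.prod MeasureTheory.volume)) with hP
  set S : Set (ℝ × ℝ × ℝ × ℝ) :=
    Set.Ioc (-Λ₁) Λ₁ ×ˢ Set.Ioc (-Λ₂) Λ₂ ×ˢ Set.Ioc 0 (2*π) ×ˢ Set.Ioc 0 (2*π) with hS
  set F : ℝ → ℝ × ℝ × ℝ × ℝ → ℝ := fun r v =>
    φ ((1 / r) * argcosh (Xfun r Λ₁ Λ₂ v.1 v.2.1 v.2.2.1 v.2.2.2)) * ψ (v.1 + v.2.1) with hF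
  set G : ℝ × ℝ × ℝ × ℝ → ℝ := fun v =>
    φ (max (Λ₁ + v.2.1) (Λ₂ - v.1)) * ψ (v.1 + v.2.1) with hG
  have hFc : ∀ r, Continuous (F r) := by
    intro r
    apply Continuous.mul
    · exact hφ.comp (continuous_const.mul (continuous_argcosh_comp (continuous_Xfun r Λ₁ Λ₂)
        (fun v => one_le_Xfun r Λ₁ Λ₂ v.1 v.2.1 v.2.2.1 v.2.2.2)))
    · exact hψ.comp (by fun_prop)
  have hGc : Continuous G := by
    apply Continuous.mul
    · exact hφ.comp (by fun_prop)
    · exact hψ.comp (by fun_prop)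
  -- step 1: the iterated integral equals the product-set integral
  have step1 : ∀ r : ℝ,
      (∫ μ₁ in (-Λ₁)..Λ₁, ∫ μ₂ in (-Λ₂)..Λ₂,
        ∫ θ₁ in (0:ℝ)..(2 * π), ∫ θ₂ in (0:ℝ)..(2 * π),
          F r (μ₁, μ₂, θ₁, θ₂)) = ∫ v in S, F r v ∂P := by
    intro r
    rw [hS, hP, iter4 (hFc r)]
    simp only [intervalIntegral.integral_of_le (by linarith : -Λ₁ ≤ Λ₁),
      intervalIntegral.integral_of_le (by linarith : -Λ₂ ≤ Λ₂),
      intervalIntegral.integral_of_le (by linarith : (0:ℝ) ≤ 2*π)]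
  have hθ : ∀ c : ℝ, (∫ _x₃ in Set.Ioc (0:ℝ) (2*π), ∫ _x₄ in Set.Ioc (0:ℝ) (2*π), c) =
      2*π*(2*π) * c := by
    intro c
    rw [MeasureTheory.setIntegral_const, MeasureTheory.setIntegral_const]
    simp only [MeasureTheory.measureReal_def, Real.volume_Ioc, smul_eq_mul, sub_zero,
      ENNReal.toReal_ofReal (by linarith : (0:ℝ) ≤ 2*π)]
    ring
  have step1G : (∫ v in S, G v ∂P) = 2*π*(2*π) *
      ∫ μ₁ in (-Λ₁)..Λ₁, ∫ μ₂ in (-Λ₂)..Λ₂,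
        φ (max (Λ₁ + μ₂) (Λ₂ - μ₁)) * ψ (μ₁ + μ₂) := by
    rw [hS, hP, iter4 hGc,
      intervalIntegral.integral_of_le (by linarith : -Λ₁ ≤ Λ₁),
      ← MeasureTheory.integral_const_mul]
    refine MeasureTheory.integral_congr_ae (Filter.Eventually.of_forall fun μ₁ => ?_)
    show _ = 2*π*(2*π) * ∫ μ₂ in (-Λ₂)..Λ₂, φ (max (Λ₁ + μ₂) (Λ₂ - μ₁)) * ψ (μ₁ + μ₂)
    rw [intervalIntegral.integral_of_le (by linarith : -Λ₂ ≤ Λ₂),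
      ← MeasureTheory.integral_const_mul]
    refine MeasureTheory.integral_congr_ae (Filter.Eventually.of_forall fun μ₂ => ?_)
    show (∫ _x₃ in Set.Ioc (0:ℝ) (2*π), ∫ _x₄ in Set.Ioc (0:ℝ) (2*π),
      φ (max (Λ₁ + μ₂) (Λ₂ - μ₁)) * ψ (μ₁ + μ₂)) = _
    exact hθ _
  -- step 2: DCT
  have hSmeas : MeasurableSet S := by
    rw [hS]
    exact (measurableSet_Ioc.prod (measurableSet_Ioc.prod
      (measurableSet_Ioc.prod measurableSet_Ioc)))
  have hSfin : P S ≠ ⊤ := by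
    rw [hS, hP, MeasureTheory.Measure.prod_prod, MeasureTheory.Measure.prod_prod,
      MeasureTheory.Measure.prod_prod]
    exact (ENNReal.mul_lt_top measure_Ioc_lt_top (ENNReal.mul_lt_top measure_Ioc_lt_top
      (ENNReal.mul_lt_top measure_Ioc_lt_top measure_Ioc_lt_top))).ne
  obtain ⟨Cφ, hCφ⟩ := (isCompact_Icc (a := (0:ℝ)) (b := Λ₁ + Λ₂ + Real.log 10)
    ).exists_bound_of_continuousOn hφ.continuousOn
  obtain ⟨Cψ, hCψ⟩ := (isCompact_Icc (a := -(Λ₁ + Λ₂)) (b := Λ₁ + Λ₂)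
    ).exists_bound_of_continuousOn hψ.continuousOn
  have hCφ0 : 0 ≤ Cφ := le_trans (norm_nonneg _)
    (hCφ 0 ⟨le_refl _, by positivity⟩)
  have hCψ0 : 0 ≤ Cψ := le_trans (norm_nonneg _)
    (hCψ 0 ⟨by linarith, by linarith⟩)
  have hmem : ∀ v ∈ S, |v.1| ≤ Λ₁ ∧ |v.2.1| ≤ Λ₂ := by
    intro v hv
    rw [hS] at hv
    obtain ⟨h1, h2, -⟩ := hv
    exact ⟨abs_le.mpr ⟨h1.1.le, h1.2⟩, abs_le.mpr ⟨h2.1.le, h2.2⟩⟩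
  have step2 : Tendsto (fun r => ∫ v in S, F r v ∂P) atTop (nhds (∫ v in S, G v ∂P)) := by
    apply MeasureTheory.tendsto_integral_filter_of_dominated_convergence
      (fun _ => Cφ * Cψ)
    · exact Filter.Eventually.of_forall
        (fun r => (hFc r).aestronglyMeasurable.restrict)
    · filter_upwards [eventually_ge_atTop (1:ℝ)] with r hr
      filter_upwards [MeasureTheory.ae_restrict_mem hSmeas] with v hv
      obtain ⟨h1, h2⟩ := hmem v hv
      have hL := L_mem v.2.2.1 v.2.2.2 hr hΛ₁ hΛ₂ h1 h2
      have habs1 := abs_le.mp h1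
      have habs2 := abs_le.mp h2
      have hs : v.1 + v.2.1 ∈ Set.Icc (-(Λ₁ + Λ₂)) (Λ₁ + Λ₂) :=
        ⟨by linarith [habs1.1, habs2.1], by linarith [habs1.2, habs2.2]⟩
      rw [hF]
      simp only [norm_mul]
      exact mul_le_mul (hCφ _ hL) (hCψ _ hs) (norm_nonneg _) hCφ0
    · exact MeasureTheory.integrableOn_const hSfin
    · -- a.e. pointwise convergence
      have hN1 : P {v : ℝ × ℝ × ℝ × ℝ | v.1 = Λ₁} = 0 := by
        have he : {v : ℝ × ℝ × ℝ × ℝ | v.1 = Λ₁} = ({Λ₁} : Set ℝ) ×ˢ (Set.univ) := by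
          ext v
          simp only [Set.mem_setOf_eq, Set.mem_prod, Set.mem_singleton_iff, Set.mem_univ, and_true]
        rw [hP, he, MeasureTheory.Measure.prod_prod]
        simp
      have hN2 : P {v : ℝ × ℝ × ℝ × ℝ | v.2.1 = Λ₂} = 0 := by
        have he : {v : ℝ × ℝ × ℝ × ℝ | v.2.1 = Λ₂} =
            (Set.univ : Set ℝ) ×ˢ (({Λ₂} : Set ℝ) ×ˢ (Set.univ)) := by
          ext v
          simp only [Set.mem_setOf_eq, Set.mem_prod, Set.mem_singleton_iff, Set.mem_univ,
            true_and, and_true]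
        rw [hP, he, MeasureTheory.Measure.prod_prod, MeasureTheory.Measure.prod_prod]
        simp
      have hN3 : P {v : ℝ × ℝ × ℝ × ℝ | Λ₁ + v.2.1 = Λ₂ - v.1} = 0 := by
        have hm : MeasurableSet {v : ℝ × ℝ × ℝ × ℝ | Λ₁ + v.2.1 = Λ₂ - v.1} := by
          have hc : Continuous fun v : ℝ × ℝ × ℝ × ℝ => Λ₁ + v.2.1 - (Λ₂ - v.1) := by fun_prop
          have he : {v : ℝ × ℝ × ℝ × ℝ | Λ₁ + v.2.1 = Λ₂ - v.1} =
              (fun v : ℝ × ℝ × ℝ × ℝ => Λ₁ + v.2.1 - (Λ₂ - v.1)) ⁻¹' {0} := by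
            ext v; simp [sub_eq_zero]
          rw [he]; exact hc.measurable (measurableSet_singleton 0)
        rw [hP, MeasureTheory.Measure.prod_apply hm]
        have hz : ∀ x : ℝ,
            (MeasureTheory.volume.prod (MeasureTheory.volume.prod MeasureTheory.volume))
            {a : ℝ × ℝ × ℝ | Λ₁ + a.1 = Λ₂ - x} = 0 := by
          intro x
          have he : {a : ℝ × ℝ × ℝ | Λ₁ + a.1 = Λ₂ - x} =
              ({Λ₂ - x - Λ₁} : Set ℝ) ×ˢ (Set.univ : Set (ℝ × ℝ)) := by
            ext y
            simp only [Set.mem_setOf_eq, Set.mem_prod, Set.mem_singleton_iff,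
              Set.mem_univ, and_true]
            constructor <;> intro h <;> linarith
          rw [he, MeasureTheory.Measure.prod_prod]
          simp
        simp [hz]
      have hbad : P ({v : ℝ × ℝ × ℝ × ℝ | v.1 = Λ₁} ∪ {v : ℝ × ℝ × ℝ × ℝ | v.2.1 = Λ₂} ∪
          {v : ℝ × ℝ × ℝ × ℝ | Λ₁ + v.2.1 = Λ₂ - v.1}) = 0 :=
        measure_union_null (measure_union_null hN1 hN2) hN3
      have hae := MeasureTheory.ae_restrict_of_ae (μ := P) (s := S)
        ((MeasureTheory.measure_eq_zero_iff_ae_notMem (μ := P)).mp hbad)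
      filter_upwards [MeasureTheory.ae_restrict_mem hSmeas, hae] with v hv hnb
      rw [Set.mem_union, Set.mem_union] at hnb
      push_neg at hnb
      obtain ⟨⟨hb1, hb2⟩, hb3⟩ := hnb
      simp only [Set.mem_setOf_eq] at hb1 hb2 hb3
      obtain ⟨h1, h2⟩ := hmem v hv
      rw [hS] at hv
      have h1' : |v.1| < Λ₁ := abs_lt.mpr ⟨hv.1.1, lt_of_le_of_ne hv.1.2 hb1⟩
      have h2' : |v.2.1| < Λ₂ := abs_lt.mpr ⟨hv.2.1.1, lt_of_le_of_ne hv.2.1.2 hb2⟩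
      have hcore := core_tendsto (Λ₁ := Λ₁) (Λ₂ := Λ₂) v.2.2.1 v.2.2.2 h1' h2' hb3
      rw [hF]
      exact ((hφ.continuousAt.tendsto).comp hcore).mul_const _
  -- final assembly
  have hlim : (1 / (4 * Λ₁ * Λ₂ * (4 * Real.pi ^ 2))) * ∫ v in S, G v ∂P =
      (1 / (4 * Λ₁ * Λ₂)) * ∫ μ₁ in (-Λ₁)..Λ₁, ∫ μ₂ in (-Λ₂)..Λ₂,
        φ (max (Λ₁ + μ₂) (Λ₂ - μ₁)) * ψ (μ₁ + μ₂) := by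
    rw [step1G]
    have hπ' : (π : ℝ) ≠ 0 := hπ.ne'
    field_simp
    ring
  have hmain := step2.const_mul (1 / (4 * Λ₁ * Λ₂ * (4 * Real.pi ^ 2)))
  rw [hlim] at hmain
  refine hmain.congr fun r => ?_
  exact congrArg (fun z => (1 / (4 * Λ₁ * Λ₂ * (4 * Real.pi ^ 2))) * z) (step1 r).symm
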